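/- Let a be a finite-dimensional Lie algebra over a field K of characteristic 0 admitting an invertible derivation D, and let θ be a cyclic 2-cocycle on a with values in a*. Define Θ(x,y,z) = θ(Dx,y)(z) + θ(Dy,z)(x) + θ(Dz,x)(y) for x,y,z in a. If there exists an alternating bilinear form F : a × a → K such that Θ(x,y,z) = −F([x,y],z) + F(x,[y,z]) − F(y,[x,z]) for all x,y,z in a (i.e. Θ is a 3-coboundary for the scalar cohomology of a), then the quadratic Lie algebra (T*_θ a, B_θ) admits a symplectic structure. -/

import Mathlib

/-- Let `a` be a Lie algebra with an invertible derivation `D` and `θ` a cyclic 2-cocycle with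
values in `a*` (so that the `T*`-extension bracket `br` on `a × a*` satisfies the Jacobi
identity).  If `Θ(x,y,z) = θ(Dx,y)(z) + θ(Dy,z)(x) + θ(Dz,x)(y)` is a scalar 3-coboundary,
then the quadratic Lie algebra `T*_θ a` admits a symplectic structure. -/
theorem stmt_5 (K : Type*) [Field K] [CharZero K]
    (a : Type*) [LieRing a] [LieAlgebra K a] [Module.Finite K a]
    (D : a ≃ₗ[K] a)
    (hD : ∀ x y : a, D ⁅x, y⁆ = ⁅D x, y⁆ + ⁅x, D y⁆)
    (θ : a →ₗ[K] a →ₗ[K] Module.Dual K a)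
    (hθalt : ∀ x : a, θ x x = 0)
    (hθcyc : ∀ x y z : a, θ x y z = θ y z x)
    (br : a × Module.Dual K a → a × Module.Dual K a → a × Module.Dual K a)
    (hbr : ∀ p q : a × Module.Dual K a, br p q =
      (⁅p.1, q.1⁆, θ p.1 q.1 + p.2 ∘ₗ (LieAlgebra.ad K a q.1 : a →ₗ[K] a)
        - q.2 ∘ₗ (LieAlgebra.ad K a p.1 : a →ₗ[K] a)))
    (hJac : ∀ p q r : a × Module.Dual K a,
      br (br p q) r + br (br q r) p + br (br r p) q = 0)
    (F : LinearMap.BilinForm K a)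
    (hFalt : ∀ x : a, F x x = 0)
    (hΘ : ∀ x y z : a, θ (D x) y z + θ (D y) z x + θ (D z) x y =
      - F ⁅x, y⁆ z + F x ⁅y, z⁆ - F y ⁅x, z⁆) :
    ∃ ω : LinearMap.BilinForm K (a × Module.Dual K a),
      ω.Nondegenerate ∧ (∀ p : a × Module.Dual K a, ω p p = 0) ∧
      ∀ p q r : a × Module.Dual K a,
        ω (br p q) r + ω (br q r) p + ω (br r p) q = 0 := by
  have hFskew : ∀ u v : a, F u v = - F v u := by
    intro u v
    have h := hFalt (u + v)
    simp [map_add, LinearMap.add_apply, hFalt] at h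
    linear_combination h
  refine ⟨LinearMap.mk₂ K
      (fun p q => p.2 (D q.1) - q.2 (D p.1) + F p.1 q.1)
      (by intro p p' q; simp [map_add, LinearMap.add_apply]; ring)
      (by intro c p q; simp [map_smul, LinearMap.smul_apply, smul_eq_mul]; ring)
      (by intro p q q'; simp [map_add, LinearMap.add_apply]; ring)
      (by intro c p q; simp [map_smul, LinearMap.smul_apply, smul_eq_mul]; ring),
    ?_, ?_, ?_⟩
  · -- Nondegenerate
    refine ⟨?_, ?_⟩
    · intro p hp
      have h1 : p.1 = 0 := by
        have : ∀ g : Module.Dual K a, g (D p.1) = 0 := by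
          intro g
          have := hp (0, g)
          simpa using this
        have hD0 : D p.1 = 0 := by
          rwa [Module.forall_dual_apply_eq_zero_iff] at this
        have := D.injective (by simpa using hD0)
        simpa using this
      have h2 : p.2 = 0 := by
        ext y
        obtain ⟨z, hz⟩ := D.surjective y
        have := hp (z, 0)
        simp [h1, hz] at this
        simpa [hz] using this
      exact Prod.ext h1 h2
    · intro p hp
      have h1 : p.1 = 0 := by
        have : ∀ g : Module.Dual K a, g (D p.1) = 0 := by
          intro g
          have := hp (0, g)
          simpa using this
        have hD0 : D p.1 = 0 := by
          rwa [Module.forall_dual_apply_eq_zero_iff] at this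
        have := D.injective (by simpa using hD0)
        simpa using this
      have h2 : p.2 = 0 := by
        ext y
        obtain ⟨z, hz⟩ := D.surjective y
        have := hp (z, 0)
        simp [h1, hz] at this
        simpa [hz] using this
      exact Prod.ext h1 h2
  · -- alternating
    intro p
    simp [hFalt]
  · -- closedness
    rintro ⟨x, f⟩ ⟨y, g⟩ ⟨z, h⟩
    simp only [hbr, LinearMap.mk₂_apply, LinearMap.sub_apply, LinearMap.add_apply,
      LinearMap.comp_apply, LieAlgebra.ad_apply]
    have e1 : h (D ⁅x, y⁆) = h ⁅D x, y⁆ + h ⁅x, D y⁆ := by rw [hD]; simp [map_add]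
    have e2 : f (D ⁅y, z⁆) = f ⁅D y, z⁆ + f ⁅y, D z⁆ := by rw [hD]; simp [map_add]
    have e3 : g (D ⁅z, x⁆) = g ⁅D z, x⁆ + g ⁅z, D x⁆ := by rw [hD]; simp [map_add]
    have c1 : θ (D z) x y = θ x y (D z) := hθcyc (D z) x y
    have c2 : θ (D x) y z = θ y z (D x) := hθcyc (D x) y z
    have c3 : θ (D y) z x = θ z x (D y) := hθcyc (D y) z x
    have l1 : f ⁅z, D y⁆ = - f ⁅D y, z⁆ := by rw [← lie_skew, map_neg]
    have l2 : g ⁅x, D z⁆ = - g ⁅D z, x⁆ := by rw [← lie_skew, map_neg]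
    have l3 : h ⁅y, D x⁆ = - h ⁅D x, y⁆ := by rw [← lie_skew, map_neg]
    have s1 : F x ⁅y, z⁆ = - F ⁅y, z⁆ x := hFskew x ⁅y, z⁆
    have s2 : F y ⁅x, z⁆ = - F ⁅x, z⁆ y := hFskew y ⁅x, z⁆
    have s3 : F ⁅z, x⁆ y = - F ⁅x, z⁆ y := by rw [← lie_skew, map_neg]; simp
    have hT := hΘ x y z
    linear_combination hT - e1 - e2 - e3 - c1 - c2 - c3 - l1 - l2 - l3 + s1 - s2 + s3
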